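/- Let a,b,c,d,α,β ∈ ℂ((t)) be formal Laurent series, each convergent on a punctured disc {0 < |z| < r} for some r > 0 (so each defines a holomorphic function on 𝔻_r∖{0}, meromorphic at 0), with c ≠ 0 and ad−bc ≠ 0. Let ρ, λ > 0 satisfy the non-Archimedean conditions: |α + d/c|_{na} > ρ, |ad−bc|_{na}·ρ/(|c|²_{na}·|α+d/c|²_{na}) < λ, and |(aα+b)/(cα+d) − β|_{na} < λ. Then there exist v > 0 and z₀ ∈ (0,r) such that for every z with 0 < |z| < z₀ and every x ∈ ℂ with |x − α(z)| < ρ^{log(1/|z|)}, one has c(z)x + d(z) ≠ 0 and |(a(z)x + b(z))/(c(z)x + d(z)) − β(z)| ≤ |z|^{v}·λ^{log(1/|z|)}, where f(z) denotes the value at z of the convergent Laurent series f and |·| on ℂ is the usual absolute value. (This is Lemma 3.12 on uniform separation: the Archimedean discs of a degenerating family are eventually contained in a definite shrinking of the disc predicted by the non-Archimedean data.) -/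

import Mathlib

/-- `F` is holomorphic on a punctured disc around `0` and meromorphic at `0`, with order
exactly `m`: it can be written `F(z) = z^m g(z)` with `g` holomorphic near `0` and
`g(0) ≠ 0`. The non-Archimedean norm of the corresponding Laurent series is `e^{-m}`. -/
def MeroOrdAt (F : ℂ → ℂ) (m : ℤ) : Prop :=
  ∃ r : ℝ, 0 < r ∧ ∃ g : ℂ → ℂ, DifferentiableOn ℂ g (Metric.ball 0 r) ∧ g 0 ≠ 0 ∧
    ∀ z ∈ Metric.ball (0 : ℂ) r \ {0}, F z = z ^ m * g z

/-- `F` is holomorphic on a punctured disc around `0` and meromorphic at `0` (possibly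
vanishing identically near `0`). -/
def MeroAt0 (F : ℂ → ℂ) : Prop :=
  (∃ m : ℤ, MeroOrdAt F m) ∨
    ∃ r : ℝ, 0 < r ∧ ∀ z ∈ Metric.ball (0 : ℂ) r \ {0}, F z = 0

lemma mero_bounds {F : ℂ → ℂ} {m : ℤ} (h : MeroOrdAt F m) {ε : ℝ} (hε : 0 < ε) :
    ∃ z₀ : ℝ, 0 < z₀ ∧ ∀ z : ℂ, 0 < ‖z‖ → ‖z‖ < z₀ →
      Real.exp (((m : ℝ) + ε) * Real.log ‖z‖) ≤ ‖F z‖ ∧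
      ‖F z‖ ≤ Real.exp (((m : ℝ) - ε) * Real.log ‖z‖) := by
  obtain ⟨r, hr, g, hg, hg0, hFg⟩ := h
  have hG : 0 < ‖g 0‖ := norm_pos_iff.mpr hg0
  have hcont : ContinuousAt g 0 :=
    hg.continuousOn.continuousAt (Metric.ball_mem_nhds 0 hr)
  obtain ⟨δ, hδpos, hδ⟩ := Metric.continuousAt_iff.mp hcont (‖g 0‖ / 2) (by positivity)
  set K : ℝ := min (‖g 0‖ / 2) (1 / (2 * ‖g 0‖)) with hKdef
  have hK : 0 < K := lt_min (by positivity) (by positivity)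
  have hKpow : (0:ℝ) < K ^ ε⁻¹ := Real.rpow_pos_of_pos hK _
  refine ⟨min δ (min r (K ^ ε⁻¹)), by positivity, ?_⟩
  intro z hz hzlt
  have hzδ : ‖z‖ < δ := lt_of_lt_of_le hzlt (min_le_left _ _)
  have hzr : ‖z‖ < r := lt_of_lt_of_le hzlt ((min_le_right _ _).trans (min_le_left _ _))
  have hzK : ‖z‖ < K ^ ε⁻¹ := lt_of_lt_of_le hzlt ((min_le_right _ _).trans (min_le_right _ _))
  have hdist : dist (g z) (g 0) < ‖g 0‖ / 2 := hδ (by simpa [dist_eq_norm] using hzδ)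
  have hgz1 : ‖g 0‖ / 2 ≤ ‖g z‖ := by
    have h1 : ‖g z - g 0‖ < ‖g 0‖ / 2 := by rwa [dist_eq_norm] at hdist
    have h2 : ‖g 0‖ - ‖g z‖ ≤ ‖g 0 - g z‖ := norm_sub_norm_le _ _
    rw [norm_sub_rev] at h2
    linarith
  have hgz2 : ‖g z‖ ≤ 2 * ‖g 0‖ := by
    have h1 : ‖g z - g 0‖ < ‖g 0‖ / 2 := by rwa [dist_eq_norm] at hdist
    have h2 : ‖g z‖ - ‖g 0‖ ≤ ‖g z - g 0‖ := norm_sub_norm_le _ _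
    linarith
  have hzmem : z ∈ Metric.ball (0 : ℂ) r \ {0} :=
    ⟨Metric.mem_ball.mpr (by simpa [dist_eq_norm] using hzr), by simpa using norm_pos_iff.mp hz⟩
  have hεK : ‖z‖ ^ ε ≤ K := by
    calc ‖z‖ ^ ε ≤ (K ^ ε⁻¹) ^ ε := Real.rpow_le_rpow (norm_nonneg z) hzK.le hε.le
      _ = K := Real.rpow_inv_rpow hK.le hε.ne'
  have hzm : (0:ℝ) < ‖z‖ ^ m := zpow_pos hz m
  have hrpow : ∀ s : ℝ, Real.exp (s * Real.log ‖z‖) = ‖z‖ ^ s := fun s => by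
    rw [Real.rpow_def_of_pos hz, mul_comm]
  rw [hFg z hzmem, norm_mul, norm_zpow]
  constructor
  · rw [hrpow, show ((m:ℝ) + ε) = (m:ℝ) + ε from rfl, Real.rpow_add hz, Real.rpow_intCast]
    have h3 : ‖z‖ ^ ε ≤ ‖g z‖ := le_trans (hεK.trans (min_le_left _ _)) hgz1
    exact mul_le_mul_of_nonneg_left h3 hzm.le
  · rw [hrpow, sub_eq_add_neg, Real.rpow_add hz, Real.rpow_intCast]
    have h4 : ‖g z‖ ≤ ‖z‖ ^ (-ε : ℝ) := by
      rw [Real.rpow_neg (norm_nonneg z), inv_eq_one_div, le_div_iff₀ (Real.rpow_pos_of_pos hz ε)]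
      have hK2 : K ≤ 1 / (2 * ‖g 0‖) := min_le_right _ _
      have hq : ‖z‖ ^ ε ≤ 1 / (2 * ‖g 0‖) := hεK.trans hK2
      have h5 : 2 * ‖g 0‖ * ‖z‖ ^ ε ≤ 2 * ‖g 0‖ * (1 / (2 * ‖g 0‖)) :=
        mul_le_mul_of_nonneg_left hq (by positivity)
      have h6 : 2 * ‖g 0‖ * (1 / (2 * ‖g 0‖)) = 1 := by rw [mul_one_div]; exact div_self (by positivity)
      have h7 := Real.rpow_pos_of_pos hz ε
      nlinarith
    exact mul_le_mul_of_nonneg_left h4 hzm.le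

/-- **Lemma 3.12** (uniform separation): if the non-Archimedean data of a degenerating
Möbius family predicts that the image of the disc `D(α,ρ)` is contained in `D(β,λ)`, then
for small `z` the Archimedean image discs are contained in a definite shrinking
`|z|^v · λ^{log(1/|z|)}` of the predicted disc. -/
theorem uniform_separation
    (a b c d α β : ℂ → ℂ)
    (ha : MeroAt0 a) (hb : MeroAt0 b) (hd : MeroAt0 d) (hα : MeroAt0 α) (hβ : MeroAt0 β)
    (mc : ℤ) (hc : MeroOrdAt c mc)
    (mdet : ℤ) (hdet : MeroOrdAt (fun z => a z * d z - b z * c z) mdet)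
    (mac : ℤ) (hac : MeroOrdAt (fun z => α z + d z / c z) mac)
    (ρ lam : ℝ) (hρ : 0 < ρ) (hlam : 0 < lam)
    (h1 : ρ < Real.exp (-(mac : ℝ)))
    (h2 : Real.exp (-(mdet : ℝ)) * ρ /
        (Real.exp (-(mc : ℝ)) ^ 2 * Real.exp (-(mac : ℝ)) ^ 2) < lam)
    (h3 : (∃ mγ : ℤ,
        MeroOrdAt (fun z => (a z * α z + b z) / (c z * α z + d z) - β z) mγ ∧
        Real.exp (-(mγ : ℝ)) < lam) ∨
      (∃ r : ℝ, 0 < r ∧ ∀ z ∈ Metric.ball (0 : ℂ) r \ {0},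
        (a z * α z + b z) / (c z * α z + d z) - β z = 0)) :
    ∃ v : ℝ, 0 < v ∧ ∃ z₀ : ℝ, 0 < z₀ ∧
      ∀ z : ℂ, 0 < ‖z‖ → ‖z‖ < z₀ →
        ∀ x : ℂ, ‖x - α z‖ < ρ ^ Real.log (1 / ‖z‖) →
          c z * x + d z ≠ 0 ∧
          ‖(a z * x + b z) / (c z * x + d z) - β z‖ ≤
            ‖z‖ ^ v * lam ^ Real.log (1 / ‖z‖) := by
  have hlρ : Real.log ρ < -(mac : ℝ) := by
    have h := Real.log_lt_log hρ h1
    rwa [Real.log_exp] at h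
  set lρ := Real.log ρ with hlρdef
  set ll := Real.log lam with hlldef
  have h2' : -(mdet : ℝ) + lρ + 2 * (mc : ℝ) + 2 * (mac : ℝ) < ll := by
    have hden : (0:ℝ) < Real.exp (-(mc : ℝ)) ^ 2 * Real.exp (-(mac : ℝ)) ^ 2 := by positivity
    have h2a : Real.exp (-(mdet : ℝ)) * ρ <
        lam * (Real.exp (-(mc : ℝ)) ^ 2 * Real.exp (-(mac : ℝ)) ^ 2) := by
      rwa [div_lt_iff₀ hden] at h2
    have h := Real.log_lt_log (by positivity) h2a
    rw [Real.log_mul (Real.exp_ne_zero _) (ne_of_gt hρ),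
        Real.log_mul (ne_of_gt hlam) (ne_of_gt hden),
        Real.log_mul (by positivity) (by positivity),
        Real.log_pow, Real.log_pow, Real.log_exp, Real.log_exp, Real.log_exp] at h
    push_cast at h
    linarith
  set ε₁ := (-(mac : ℝ) - lρ) / 2 with hε₁def
  have hε₁ : 0 < ε₁ := by rw [hε₁def]; linarith
  set ε₂ := (ll - (-(mdet : ℝ) + lρ + 2 * (mc : ℝ) + 2 * (mac : ℝ))) / 6 with hε₂def
  have hε₂ : 0 < ε₂ := by rw [hε₂def]; linarith
  set ε := min ε₁ ε₂ with hεdef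
  have hε : 0 < ε := lt_min hε₁ hε₂
  have hεle₁ : ε ≤ ε₁ := min_le_left _ _
  have hεle₂ : ε ≤ ε₂ := min_le_right _ _
  obtain ⟨z₁, hz₁, Hc⟩ := mero_bounds hc hε
  obtain ⟨z₂, hz₂, Hdet⟩ := mero_bounds hdet hε
  obtain ⟨z₃, hz₃, Hac⟩ := mero_bounds hac hε
  have hγ : ∃ ε₃ : ℝ, 0 < ε₃ ∧ ∃ z₄ : ℝ, 0 < z₄ ∧ ∀ z : ℂ, 0 < ‖z‖ → ‖z‖ < z₄ →
      ‖(a z * α z + b z) / (c z * α z + d z) - β z‖ ≤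
        Real.exp ((ε₃ - ll) * Real.log ‖z‖) := by
    rcases h3 with ⟨mγ, hmγ, hmγlt⟩ | ⟨r, hrpos, hzero⟩
    · have hllγ : -(mγ : ℝ) < ll := by
        have h := Real.log_lt_log (Real.exp_pos _) hmγlt
        rwa [Real.log_exp] at h
      have hε₃ : 0 < (ll + (mγ : ℝ)) / 2 := by linarith
      obtain ⟨z₄, hz₄, H⟩ := mero_bounds hmγ hε₃
      refine ⟨(ll + (mγ : ℝ)) / 2, hε₃, z₄, hz₄, fun z h1 h2 => ?_⟩
      have hb := (H z h1 h2).2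
      have heq : (mγ : ℝ) - (ll + (mγ : ℝ)) / 2 = (ll + (mγ : ℝ)) / 2 - ll := by ring
      rw [heq] at hb
      exact hb
    · refine ⟨1, one_pos, r, hrpos, fun z h1 h2 => ?_⟩
      rw [hzero z ⟨Metric.mem_ball.mpr (by simpa [dist_eq_norm] using h2),
        by simpa using norm_pos_iff.mp h1⟩]
      simpa using (Real.exp_pos _).le
  obtain ⟨ε₃, hε₃, z₄, hz₄, Hγ⟩ := hγ
  set ε₄ := min ε₂ ε₃ with hε₄def
  have hε₄ : 0 < ε₄ := lt_min hε₂ hε₃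
  have hε₄le₂ : ε₄ ≤ ε₂ := min_le_left _ _
  have hε₄le₃ : ε₄ ≤ ε₃ := min_le_right _ _
  refine ⟨ε₄ / 2, by linarith, min z₁ (min z₂ (min z₃ (min z₄ (min 1
      (min (Real.exp (-(Real.log 2 / ε₁))) (Real.exp (-(2 * Real.log 3 / ε₄)))))))),
    lt_min hz₁ (lt_min hz₂ (lt_min hz₃ (lt_min hz₄ (lt_min one_pos
      (lt_min (Real.exp_pos _) (Real.exp_pos _)))))), ?_⟩
  intro z hz hzlt x hx
  have hb1 : ‖z‖ < z₁ := lt_of_lt_of_le hzlt (min_le_left _ _)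
  have hb2 : ‖z‖ < z₂ := lt_of_lt_of_le hzlt ((min_le_right _ _).trans (min_le_left _ _))
  have hb3 : ‖z‖ < z₃ := lt_of_lt_of_le hzlt
    ((min_le_right _ _).trans ((min_le_right _ _).trans (min_le_left _ _)))
  have hb4 : ‖z‖ < z₄ := lt_of_lt_of_le hzlt
    ((min_le_right _ _).trans ((min_le_right _ _).trans ((min_le_right _ _).trans (min_le_left _ _))))
  have hb5 : ‖z‖ < 1 := lt_of_lt_of_le hzlt
    ((min_le_right _ _).trans ((min_le_right _ _).trans ((min_le_right _ _).trans
      ((min_le_right _ _).trans (min_le_left _ _)))))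
  have hb6 : ‖z‖ < Real.exp (-(Real.log 2 / ε₁)) := lt_of_lt_of_le hzlt
    ((min_le_right _ _).trans ((min_le_right _ _).trans ((min_le_right _ _).trans
      ((min_le_right _ _).trans ((min_le_right _ _).trans (min_le_left _ _))))))
  have hb7 : ‖z‖ < Real.exp (-(2 * Real.log 3 / ε₄)) := lt_of_lt_of_le hzlt
    ((min_le_right _ _).trans ((min_le_right _ _).trans ((min_le_right _ _).trans
      ((min_le_right _ _).trans ((min_le_right _ _).trans (min_le_right _ _))))))
  set L := Real.log ‖z‖ with hLdef
  have hL : L < 0 := Real.log_neg hz hb5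
  have hT1 : Real.log 2 ≤ ε₁ * (-L) := by
    have h := Real.log_lt_log hz hb6
    rw [Real.log_exp] at h
    have h' : Real.log 2 / ε₁ ≤ -L := by linarith
    have h2 := (div_le_iff₀ hε₁).mp h'
    linarith [mul_comm (-L) ε₁]
  have hT2 : 2 * Real.log 3 ≤ ε₄ * (-L) := by
    have h := Real.log_lt_log hz hb7
    rw [Real.log_exp] at h
    have h' : 2 * Real.log 3 / ε₄ ≤ -L := by linarith
    have h2 := (div_le_iff₀ hε₄).mp h'
    linarith [mul_comm (-L) ε₄]
  obtain ⟨hcl, hcu⟩ := Hc z hz hb1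
  obtain ⟨hdetl, hdetu⟩ := Hdet z hz hb2
  obtain ⟨hacl, hacu⟩ := Hac z hz hb3
  have hc0 : c z ≠ 0 := by
    have h : 0 < ‖c z‖ := lt_of_lt_of_le (Real.exp_pos _) hcl
    exact norm_pos_iff.mp h
  -- rewrite the radius
  have hρpow : ρ ^ Real.log (1 / ‖z‖) = Real.exp (-lρ * L) := by
    rw [one_div, Real.log_inv, Real.rpow_def_of_pos hρ, ← hlρdef, ← hLdef]
    congr 1
    ring
  have hx' : ‖x - α z‖ ≤ Real.exp (-lρ * L) := by rw [← hρpow]; exact hx.le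
  -- step A : the radius is at most half of ‖α + d/c‖
  have stepA : Real.exp (-lρ * L) ≤ Real.exp (((mac : ℝ) + ε) * L) / 2 := by
    have harith : -lρ * L + Real.log 2 ≤ ((mac : ℝ) + ε) * L := by
      have hlρeq : -lρ * L + Real.log 2 = ((mac : ℝ) + 2 * ε₁) * L + Real.log 2 := by
        rw [hε₁def]; ring
      have hmid : ((mac : ℝ) + 2 * ε₁) * L + ε₁ * (-L) = ((mac : ℝ) + ε₁) * L := by ring
      have hlast : ((mac : ℝ) + ε₁) * L ≤ ((mac : ℝ) + ε) * L :=
        mul_le_mul_of_nonpos_right (by linarith) hL.le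
      linarith
    calc Real.exp (-lρ * L) = Real.exp (-lρ * L + Real.log 2) / 2 := by
          rw [Real.exp_add, Real.exp_log two_pos]; ring
      _ ≤ Real.exp (((mac : ℝ) + ε) * L) / 2 := by
          have := Real.exp_le_exp.mpr harith
          linarith
  have hxA : ‖x - α z‖ ≤ Real.exp (((mac : ℝ) + ε) * L) / 2 := hx'.trans stepA
  -- lower bound on x + d/c
  have hxdc : Real.exp (((mac : ℝ) + ε) * L) / 2 ≤ ‖x + d z / c z‖ := by
    have heqA : α z + d z / c z = (x + d z / c z) - (x - α z) := by ring
    have hA : ‖α z + d z / c z‖ ≤ ‖x + d z / c z‖ + ‖x - α z‖ := by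
      rw [heqA]
      exact norm_sub_le _ _
    have := hacl
    linarith
  have hcxd_eq : c z * x + d z = c z * (x + d z / c z) := by field_simp
  have hcαd_eq : c z * α z + d z = c z * (α z + d z / c z) := by field_simp
  have hcxd : Real.exp (((mc : ℝ) + ε) * L) * (Real.exp (((mac : ℝ) + ε) * L) / 2) ≤
      ‖c z * x + d z‖ := by
    rw [hcxd_eq, norm_mul]
    exact mul_le_mul hcl hxdc (by positivity) (norm_nonneg _)
  have hcαd : Real.exp (((mc : ℝ) + ε) * L) * Real.exp (((mac : ℝ) + ε) * L) ≤
      ‖c z * α z + d z‖ := by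
    rw [hcαd_eq, norm_mul]
    exact mul_le_mul hcl hacl (Real.exp_pos _).le (norm_nonneg _)
  have hcxd0 : c z * x + d z ≠ 0 := by
    apply norm_pos_iff.mp
    exact lt_of_lt_of_le (by positivity) hcxd
  have hcαd0 : c z * α z + d z ≠ 0 := by
    apply norm_pos_iff.mp
    exact lt_of_lt_of_le (by positivity) hcαd
  refine ⟨hcxd0, ?_⟩
  have key : (a z * x + b z) / (c z * x + d z) - β z =
      (a z * d z - b z * c z) * (x - α z) / ((c z * x + d z) * (c z * α z + d z)) +
      ((a z * α z + b z) / (c z * α z + d z) - β z) := by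
    rw [div_sub' hcxd0, div_sub' hcαd0, div_add_div _ _ (mul_ne_zero hcxd0 hcαd0) hcαd0,
      div_eq_div_iff hcxd0 (mul_ne_zero (mul_ne_zero hcxd0 hcαd0) hcαd0)]
    ring
  have hdenpos : 0 < ‖(c z * x + d z) * (c z * α z + d z)‖ := by
    rw [norm_mul]
    exact mul_pos (lt_of_lt_of_le (by positivity) hcxd) (lt_of_lt_of_le (by positivity) hcαd)
  have T1bound : ‖(a z * d z - b z * c z) * (x - α z) /
      ((c z * x + d z) * (c z * α z + d z))‖ ≤ 2 * Real.exp ((ε₂ - ll) * L) := by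
    rw [norm_div, div_le_iff₀ hdenpos]
    have hnum : ‖(a z * d z - b z * c z) * (x - α z)‖ ≤
        Real.exp (((mdet : ℝ) - ε) * L + -lρ * L) := by
      rw [norm_mul, Real.exp_add]
      exact mul_le_mul hdetu hx' (norm_nonneg _) (Real.exp_pos _).le
    have hmid : Real.exp (((mdet : ℝ) - ε) * L + -lρ * L) ≤
        2 * Real.exp ((ε₂ - ll) * L) *
          (Real.exp (((mc : ℝ) + ε) * L) * (Real.exp (((mac : ℝ) + ε) * L) / 2) *
            (Real.exp (((mc : ℝ) + ε) * L) * Real.exp (((mac : ℝ) + ε) * L))) := by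
      have hcollapse : 2 * Real.exp ((ε₂ - ll) * L) *
          (Real.exp (((mc : ℝ) + ε) * L) * (Real.exp (((mac : ℝ) + ε) * L) / 2) *
            (Real.exp (((mc : ℝ) + ε) * L) * Real.exp (((mac : ℝ) + ε) * L))) =
          Real.exp ((ε₂ - ll) * L + (((mc : ℝ) + ε) * L + ((mac : ℝ) + ε) * L +
            (((mc : ℝ) + ε) * L + ((mac : ℝ) + ε) * L))) := by
        simp only [Real.exp_add]
        ring
      rw [hcollapse]
      apply Real.exp_le_exp.mpr
      have hco : (ε₂ - ll) + (((mc : ℝ) + ε) + ((mac : ℝ) + ε) + (((mc : ℝ) + ε) + ((mac : ℝ) + ε)))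
          ≤ ((mdet : ℝ) - ε) + -lρ := by
        rw [hε₂def]
        linarith
      have hprod := mul_le_mul_of_nonpos_right hco hL.le
      linarith [hprod]
    calc ‖(a z * d z - b z * c z) * (x - α z)‖ ≤
        Real.exp (((mdet : ℝ) - ε) * L + -lρ * L) := hnum
      _ ≤ 2 * Real.exp ((ε₂ - ll) * L) *
          (Real.exp (((mc : ℝ) + ε) * L) * (Real.exp (((mac : ℝ) + ε) * L) / 2) *
            (Real.exp (((mc : ℝ) + ε) * L) * Real.exp (((mac : ℝ) + ε) * L))) := hmid
      _ ≤ 2 * Real.exp ((ε₂ - ll) * L) * ‖(c z * x + d z) * (c z * α z + d z)‖ := by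
          rw [norm_mul]
          apply mul_le_mul_of_nonneg_left ?_ (by positivity)
          exact mul_le_mul hcxd hcαd (by positivity) (norm_nonneg _)
  have Hγz := Hγ z hz hb4
  have e2 : Real.exp ((ε₂ - ll) * L) ≤ Real.exp ((ε₄ - ll) * L) :=
    Real.exp_le_exp.mpr (mul_le_mul_of_nonpos_right (by linarith) hL.le)
  have e3 : Real.exp ((ε₃ - ll) * L) ≤ Real.exp ((ε₄ - ll) * L) :=
    Real.exp_le_exp.mpr (mul_le_mul_of_nonpos_right (by linarith) hL.le)
  have hfinal : 3 * Real.exp ((ε₄ - ll) * L) ≤ Real.exp ((ε₄ / 2 - ll) * L) := by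
    have harith : Real.log 3 + (ε₄ - ll) * L ≤ (ε₄ / 2 - ll) * L := by
      have hm : (ε₄ / 2 - ll) * L - (ε₄ - ll) * L = (ε₄ * (-L)) / 2 := by ring
      linarith
    calc 3 * Real.exp ((ε₄ - ll) * L) = Real.exp (Real.log 3 + (ε₄ - ll) * L) := by
          rw [Real.exp_add, Real.exp_log (by norm_num : (0:ℝ) < 3)]
      _ ≤ Real.exp ((ε₄ / 2 - ll) * L) := Real.exp_le_exp.mpr harith
  have hRHS : ‖z‖ ^ (ε₄ / 2) * lam ^ Real.log (1 / ‖z‖) = Real.exp ((ε₄ / 2 - ll) * L) := by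
    rw [one_div, Real.log_inv, Real.rpow_def_of_pos hz, Real.rpow_def_of_pos hlam,
      ← Real.exp_add, ← hlldef, ← hLdef]
    congr 1
    ring
  rw [key, hRHS]
  calc ‖(a z * d z - b z * c z) * (x - α z) / ((c z * x + d z) * (c z * α z + d z)) +
        ((a z * α z + b z) / (c z * α z + d z) - β z)‖ ≤
      ‖(a z * d z - b z * c z) * (x - α z) / ((c z * x + d z) * (c z * α z + d z))‖ +
        ‖(a z * α z + b z) / (c z * α z + d z) - β z‖ := norm_add_le _ _
    _ ≤ 2 * Real.exp ((ε₂ - ll) * L) + Real.exp ((ε₃ - ll) * L) := add_le_add T1bound Hγz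
    _ ≤ 3 * Real.exp ((ε₄ - ll) * L) := by linarith
    _ ≤ Real.exp ((ε₄ / 2 - ll) * L) := hfinal
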